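/- Let p be an odd prime and z ∈ ℤ_p. For n ∈ ℕ let L_n(z) = ∑_{k=0}^{n} (−n)_k(n+1)_k/(k!)² · z^k, so that L_n(z) = P_n(1−2z) where P_n is the n-th Legendre polynomial. Then ∑_{k=0}^{p−1} (1/4)_k²/(k!)² · (4z(1−z))^k ≡ L_{(p−1)/2}(z) (mod p²) if p ≡ 1 (mod 4), and ∑_{k=0}^{p−1} (1/4)_k²/(k!)² · (4z(1−z))^k ≡ L_{(3p−1)/2}(z) (mod p²) if p ≡ 3 (mod 4). -/
import Mathlib


open scoped BigOperators

/-- The Pochhammer symbol `(x)_k = x(x+1)⋯(x+k-1)` in `ℚ_[p]`. -/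
noncomputable def poch (p : ℕ) [Fact p.Prime] (x : ℚ_[p]) (k : ℕ) : ℚ_[p] :=
  (ascPochhammer ℚ_[p] k).eval x

/-- The least non-negative residue `⟨α⟩_p ∈ {0,…,p-1}` of `α ∈ ℤ_[p]` modulo `p`. -/
noncomputable def res (p : ℕ) [Fact p.Prime] (α : ℤ_[p]) : ℕ :=
  (PadicInt.toZMod α).val

/-- `L_n(z) = ∑_{k=0}^n (−n)_k (n+1)_k / (k!)² · z^k = P_n(1−2z)` where `P_n` is the
`n`-th Legendre polynomial. -/
noncomputable def legendreL (p : ℕ) [Fact p.Prime] (n : ℕ) (z : ℚ_[p]) : ℚ_[p] :=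
  ∑ k ∈ Finset.range (n + 1),
    poch p (-(n : ℚ_[p])) k * poch p ((n : ℚ_[p]) + 1) k / (Nat.factorial k : ℚ_[p]) ^ 2 * z ^ k

namespace PadicLegendreAux

open Polynomial

variable (p : ℕ) [Fact p.Prime]

/-! ### Basic facts about `poch` -/

lemma poch_zero (x : ℚ_[p]) : poch p x 0 = 1 := by simp [poch]

lemma poch_succ (x : ℚ_[p]) (k : ℕ) : poch p x (k+1) = poch p x k * (x + k) :=
  ascPochhammer_succ_eval k x

lemma poch_eq_prod (x : ℚ_[p]) (k : ℕ) :
    poch p x k = ∏ j ∈ Finset.range k, (x + j) := by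
  induction k with
  | zero => simp [poch]
  | succ n ih => rw [poch_succ, ih, Finset.prod_range_succ]

lemma fact_cast_ne (k : ℕ) : ((k.factorial : ℚ_[p])) ≠ 0 :=
  Nat.cast_ne_zero.mpr k.factorial_ne_zero

/-! ### The polynomial identity: terminating quadratic transformation -/

noncomputable def uPoly : ℚ_[p][X] := C 4 * (X - X ^ 2)

noncomputable def ee (r k : ℕ) : ℚ_[p] :=
  poch p (-(r:ℚ_[p])) k * poch p ((r:ℚ_[p]) + 1/2) k / ((k.factorial : ℚ_[p]))^2

noncomputable def GG (r : ℕ) : ℚ_[p][X] :=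
  ∑ k ∈ Finset.range (r+1), C (ee p r k) * (uPoly p) ^ k

noncomputable def LL (r m : ℕ) : ℚ_[p] :=
  poch p (-(2*(r:ℚ_[p]))) m * poch p (2*(r:ℚ_[p]) + 1) m / ((m.factorial : ℚ_[p]))^2

lemma d_pow (k : ℕ) : derivative ((uPoly p) ^ (k+1))
    = C ((k:ℚ_[p])+1) * (uPoly p) ^ k * (C 4 - C 8 * X) := by
  rw [derivative_pow]
  simp only [uPoly, Nat.add_sub_cancel, derivative_mul, derivative_C, derivative_sub,
    derivative_X, derivative_pow]
  push_cast
  simp only [map_ofNat, map_add, map_mul, map_pow, map_one]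
  ring

lemma xd_pow (j : ℕ) : (X - X ^ 2) * derivative ((uPoly p) ^ j)
    = C (j:ℚ_[p]) * (uPoly p) ^ j * (1 - C 2 * X) := by
  match j with
  | 0 => simp
  | (i+1) =>
    rw [d_pow, pow_succ]
    simp only [uPoly]
    push_cast
    simp only [map_ofNat, map_add, map_mul, map_pow, map_one]
    ring

lemma key (k : ℕ) :
    (X - X ^ 2) * derivative (derivative ((uPoly p) ^ k))
      + (1 - C 2 * X) * derivative ((uPoly p) ^ k)
    = C (4 * (k:ℚ_[p]) ^ 2) * (uPoly p) ^ (k - 1)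
      - C (4 * (k:ℚ_[p]) ^ 2 + 2 * (k:ℚ_[p])) * (uPoly p) ^ k := by
  match k with
  | 0 => simp
  | (j+1) =>
    have hd : derivative ((C 4 : ℚ_[p][X]) - C 8 * X) = - C 8 := by simp
    rw [d_pow, Nat.add_sub_cancel, derivative_mul, derivative_mul, derivative_C, hd]
    have h := xd_pow p j
    rw [pow_succ (uPoly p) j]
    push_cast
    simp only [uPoly, map_ofNat, map_add, map_mul, map_pow, map_one] at h ⊢
    linear_combination ((C ((j:ℚ_[p])) + 1) * ((4:ℚ_[p][X]) - 8 * X)) * h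

lemma ee_zero (r : ℕ) : ee p r 0 = 1 := by simp [ee, poch_zero]

lemma ee_rec (r k : ℕ) :
    4 * ((k:ℚ_[p])+1)^2 * ee p r (k+1)
      = (4 * (k:ℚ_[p])^2 + 2*k - 2*r*(2*r+1)) * ee p r k := by
  have h1 : ee p r (k+1) = (poch p (-(r:ℚ_[p])) k * (-(r:ℚ_[p]) + k))
      * (poch p ((r:ℚ_[p]) + 1/2) k * (((r:ℚ_[p]) + 1/2) + k))
      / ((((k:ℚ_[p])+1) * (k.factorial : ℚ_[p])))^2 := by
    rw [ee, poch_succ, poch_succ, Nat.factorial_succ]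
    push_cast
    ring_nf
  have hF := fact_cast_ne p k
  have h2 : ((k:ℚ_[p])+1) ≠ 0 := Nat.cast_add_one_ne_zero k
  rw [h1, ee]
  field_simp
  ring

lemma ee_top (r : ℕ) : ee p r (r+1) = 0 := by
  rw [ee, poch_eq_prod]
  have : (-(r:ℚ_[p]) + r) = 0 := by ring
  rw [Finset.prod_eq_zero (Finset.self_mem_range_succ r) this]
  simp

lemma ode (r : ℕ) :
    (X - X ^ 2) * derivative (derivative (GG p r))
      + (1 - C 2 * X) * derivative (GG p r)
      + C (2*(r:ℚ_[p])*(2*r+1)) * GG p r = 0 := by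
  classical
  rw [GG]
  rw [derivative_sum]
  simp only [derivative_C_mul, derivative_sum]
  rw [Finset.mul_sum, Finset.mul_sum, Finset.mul_sum, ← Finset.sum_add_distrib,
    ← Finset.sum_add_distrib]
  have step : ∀ k ∈ Finset.range (r+1),
      (X - X^2) * (C (ee p r k) * derivative (derivative ((uPoly p)^k)))
        + (1 - C 2 * X) * (C (ee p r k) * derivative ((uPoly p)^k))
        + C (2*(r:ℚ_[p])*(2*r+1)) * (C (ee p r k) * (uPoly p)^k)
      = (fun j : ℕ => C (4 * (j:ℚ_[p])^2 * ee p r j) * (uPoly p)^(j-1)) k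
        - (fun j : ℕ => C (4 * (j:ℚ_[p])^2 * ee p r j) * (uPoly p)^(j-1)) (k+1) := by
    intro k _
    have hk := key p k
    have he := ee_rec p r k
    simp only [Nat.add_sub_cancel]
    have : C (4 * ((k:ℚ_[p])+1)^2 * ee p r (k+1)) =
        C ((4 * (k:ℚ_[p])^2 + 2*k - 2*r*(2*r+1)) * ee p r k) := by
      exact congrArg C he
    push_cast at this ⊢
    rw [this]
    calc (X - X^2) * (C (ee p r k) * derivative (derivative ((uPoly p)^k)))
        + (1 - C 2 * X) * (C (ee p r k) * derivative ((uPoly p)^k))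
        + C (2*(r:ℚ_[p])*(2*r+1)) * (C (ee p r k) * (uPoly p)^k)
        = C (ee p r k) * ((X - X^2) * derivative (derivative ((uPoly p)^k))
            + (1 - C 2 * X) * derivative ((uPoly p)^k))
          + C (2*(r:ℚ_[p])*(2*r+1)) * (C (ee p r k) * (uPoly p)^k) := by ring
      _ = _ := by
        rw [hk]
        simp only [map_mul, map_add, map_sub, map_ofNat, map_pow]
        ring
  rw [Finset.sum_congr rfl step, Finset.sum_range_sub']
  simp [ee_top]

lemma rec_of_ode {Y : ℚ_[p][X]} {c : ℚ_[p]}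
    (hY : (X - X ^ 2) * derivative (derivative Y)
      + (1 - C 2 * X) * derivative Y + C c * Y = 0) (m : ℕ) :
    ((m:ℚ_[p])+1)^2 * Y.coeff (m+1) = ((m:ℚ_[p])*((m:ℚ_[p])+1) - c) * Y.coeff m := by
  have hY' : X * derivative (derivative Y) - X * (X * derivative (derivative Y))
      + derivative Y - C 2 * (X * derivative Y) + C c * Y = 0 := by
    linear_combination hY
  match m with
  | 0 =>
    have h := congrArg (fun Q => Polynomial.coeff Q 0) hY'
    simp only [coeff_add, coeff_sub, coeff_C_mul, coeff_derivative, coeff_zero,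
      mul_coeff_zero, coeff_X_zero, coeff_C_zero, zero_mul, mul_zero] at h
    push_cast
    linear_combination h
  | 1 =>
    have h := congrArg (fun Q => Polynomial.coeff Q 1) hY'
    simp only [coeff_add, coeff_sub, coeff_C_mul, coeff_X_mul, coeff_derivative, coeff_zero,
      mul_coeff_zero, coeff_X_zero, coeff_C_zero, zero_mul, mul_zero] at h
    push_cast
    linear_combination h
  | (j+2) =>
    have h := congrArg (fun Q => Polynomial.coeff Q (j+2)) hY'
    simp only [coeff_add, coeff_sub, coeff_C_mul, coeff_X_mul, coeff_derivative, coeff_zero,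
      mul_coeff_zero, coeff_X_zero, coeff_C_zero, zero_mul, mul_zero] at h
    push_cast
    push_cast at h
    linear_combination h

lemma LL_zero (r : ℕ) : LL p r 0 = 1 := by simp [LL, poch_zero]

lemma LL_rec (r m : ℕ) :
    ((m:ℚ_[p])+1)^2 * LL p r (m+1)
      = ((m:ℚ_[p])*((m:ℚ_[p])+1) - 2*(r:ℚ_[p])*(2*r+1)) * LL p r m := by
  have h1 : LL p r (m+1) = (poch p (-(2*(r:ℚ_[p]))) m * (-(2*(r:ℚ_[p])) + m))
      * (poch p (2*(r:ℚ_[p]) + 1) m * ((2*(r:ℚ_[p]) + 1) + m))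
      / ((((m:ℚ_[p])+1) * (m.factorial : ℚ_[p])))^2 := by
    rw [LL, poch_succ, poch_succ, Nat.factorial_succ]
    push_cast
    ring_nf
  have hF := fact_cast_ne p m
  have h2 : ((m:ℚ_[p])+1) ≠ 0 := Nat.cast_add_one_ne_zero m
  rw [h1, LL]
  field_simp
  ring

lemma GG_coeff_zero (r : ℕ) : (GG p r).coeff 0 = 1 := by
  rw [coeff_zero_eq_eval_zero, GG, eval_finset_sum]
  rw [Finset.sum_eq_single_of_mem 0 (Finset.mem_range.mpr (Nat.succ_pos r))]
  · simp [ee, poch_zero]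
  · intro b _ hb
    simp [uPoly, zero_pow hb]

lemma GG_coeff (r m : ℕ) : (GG p r).coeff m = LL p r m := by
  induction m with
  | zero => rw [GG_coeff_zero, LL_zero]
  | succ m ih =>
    have h2 : (((m:ℚ_[p])+1)^2) ≠ 0 := pow_ne_zero 2 (Nat.cast_add_one_ne_zero m)
    apply mul_left_cancel₀ h2
    rw [rec_of_ode p (ode p r) m, LL_rec, ih]

lemma GG_natDegree (r : ℕ) : (GG p r).natDegree < 2*r + 1 := by
  have : (GG p r).natDegree ≤ 2*r := by
    apply Polynomial.natDegree_sum_le_of_forall_le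
    intro k hk
    refine le_trans (natDegree_mul_le) ?_
    have hu : (uPoly p).natDegree ≤ 2 := by
      refine le_trans (natDegree_mul_le) ?_
      simp only [natDegree_C, zero_add]
      refine le_trans (natDegree_sub_le _ _) ?_
      simp [natDegree_pow]
    have : ((uPoly p) ^ k).natDegree ≤ k * 2 :=
      le_trans natDegree_pow_le (Nat.mul_le_mul_left k hu)
    simp only [natDegree_C, zero_add]
    refine le_trans this ?_
    have := Finset.mem_range.mp hk
    omega
  omega

lemma GG_eval (r : ℕ) (z : ℚ_[p]) :
    (GG p r).eval z = ∑ k ∈ Finset.range (r+1), ee p r k * (4*z*(1-z))^k := by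
  rw [GG, eval_finset_sum]
  apply Finset.sum_congr rfl
  intro k _
  simp only [uPoly, eval_mul, eval_pow, eval_C, eval_sub, eval_X]
  ring_nf

/-- The terminating quadratic transformation for Legendre polynomials of even degree. -/
lemma legendre_eq_GG (r : ℕ) (z : ℚ_[p]) :
    legendreL p (2*r) z = ∑ k ∈ Finset.range (r+1), ee p r k * (4*z*(1-z))^k := by
  rw [← GG_eval, eval_eq_sum_range' (GG_natDegree p r)]
  rw [legendreL]
  apply Finset.sum_congr rfl
  intro m _
  rw [GG_coeff, LL]
  push_cast
  ring_nf

/-! ### p-adic norm estimates -/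

lemma norm_nat_le_one (n : ℕ) : ‖((n:ℚ_[p]))‖ ≤ 1 := by
  have := Padic.norm_int_le_one (p := p) (n : ℤ)
  push_cast at this
  exact this

lemma norm_nat_eq_one {n : ℕ} (hn : ¬ p ∣ n) : ‖((n:ℚ_[p]))‖ = 1 := by
  refine le_antisymm (norm_nat_le_one p n) ?_
  by_contra h
  push_neg at h
  have : ‖((n:ℤ):ℚ_[p])‖ < 1 := by push_cast; exact h
  rw [Padic.norm_intCast_lt_one_iff] at this
  exact hn (by exact_mod_cast this)

lemma norm_four (hodd : p ≠ 2) : ‖((4:ℚ_[p]))‖ = 1 := by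
  have h2 : ¬ p ∣ 4 := by
    intro h
    have hp := (Fact.out : p.Prime)
    have h4 : (4:ℕ) = 2^2 := by norm_num
    rw [h4] at h
    have := hp.dvd_of_dvd_pow h
    rw [Nat.prime_dvd_prime_iff_eq hp Nat.prime_two] at this
    exact hodd this
  have := norm_nat_eq_one p h2
  push_cast at this
  exact this

lemma norm_fact_eq_one {k : ℕ} (hk : k < p) : ‖((k.factorial : ℚ_[p]))‖ = 1 := by
  apply norm_nat_eq_one
  rw [(Fact.out : p.Prime).dvd_factorial]
  omega

lemma norm_quarter (hodd : p ≠ 2) : ‖((1:ℚ_[p])/4)‖ = 1 := by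
  rw [norm_div, norm_one, norm_four p hodd]
  norm_num

lemma norm_aj (hodd : p ≠ 2) (j : ℕ) : ‖((1:ℚ_[p])/4 + j)‖ ≤ 1 := by
  refine le_trans (Padic.nonarchimedean _ _) ?_
  rw [norm_quarter p hodd]
  exact max_le le_rfl (norm_nat_le_one p j)

/-- ultrametric bound for difference of products -/
lemma prod_sub_prod_norm (f g : ℕ → ℚ_[p]) {ε : ℝ} (hε0 : 0 ≤ ε)
    (hf : ∀ j, ‖f j‖ ≤ 1) (hg : ∀ j, ‖g j‖ ≤ 1) (hfg : ∀ j, ‖f j - g j‖ ≤ ε) (n : ℕ) :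
    ‖(∏ j ∈ Finset.range n, f j) - ∏ j ∈ Finset.range n, g j‖ ≤ ε := by
  induction n with
  | zero => simpa using hε0
  | succ n ih =>
    have hgprod : ‖∏ j ∈ Finset.range n, g j‖ ≤ 1 := by
      rw [norm_prod]
      exact Finset.prod_le_one (fun j _ => norm_nonneg _) (fun j _ => hg j)
    have key : (∏ j ∈ Finset.range (n+1), f j) - ∏ j ∈ Finset.range (n+1), g j
        = ((∏ j ∈ Finset.range n, f j) - ∏ j ∈ Finset.range n, g j) * f n
          + (∏ j ∈ Finset.range n, g j) * (f n - g n) := by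
      rw [Finset.prod_range_succ, Finset.prod_range_succ]
      ring
    rw [key]
    refine le_trans (Padic.nonarchimedean _ _) (max_le ?_ ?_)
    · rw [norm_mul]
      calc _ ≤ ε * 1 := mul_le_mul ih (hf n) (norm_nonneg _) hε0
        _ = ε := mul_one ε
    · rw [norm_mul]
      calc _ ≤ 1 * ε := mul_le_mul hgprod (hfg n) (norm_nonneg _) zero_le_one
        _ = ε := one_mul ε

/-! ### The main congruence, unified over the two cases -/

lemma main (hodd : p ≠ 2) (r δ : ℕ) (h4 : 4*r + 1 = δ*p) (hrp : r < p) (z : ℤ_[p]) :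
    ‖(∑ k ∈ Finset.range p,
        poch p ((1 : ℚ_[p]) / 4) k ^ 2 / (Nat.factorial k : ℚ_[p]) ^ 2
          * (4 * (z : ℚ_[p]) * (1 - (z : ℚ_[p]))) ^ k)
      - legendreL p (2*r) (z : ℚ_[p])‖ ≤ (p : ℝ) ^ (-2 : ℤ) := by
  have hp1 : (1:ℝ) ≤ (p:ℝ) := by
    exact_mod_cast Nat.one_le_cast.mpr (Fact.out : p.Prime).one_lt.le
  have hpinv1 : ((p:ℝ))⁻¹ ≤ 1 := by
    rw [inv_le_one_iff₀]; right; exact hp1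
  have hpinv0 : (0:ℝ) ≤ ((p:ℝ))⁻¹ := by positivity
  set ε : ℝ := (p : ℝ) ^ (-2 : ℤ) with hεdef
  have hε : ε = ((p:ℝ)⁻¹)^2 := by
    rw [hεdef, zpow_neg, inv_pow]
    congr 1
  have hε0 : 0 ≤ ε := by rw [hε]; positivity
  have hε1 : ε ≤ 1 := by
    rw [hε]
    calc ((p:ℝ)⁻¹)^2 ≤ 1^2 := pow_le_pow_left₀ hpinv0 hpinv1 2
      _ = 1 := one_pow 2
  -- basic cast identity
  have hc : (4:ℚ_[p])*(r:ℚ_[p]) + 1 = (δ:ℚ_[p])*(p:ℚ_[p]) := by exact_mod_cast h4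
  set w : ℚ_[p] := (δ:ℚ_[p])*(p:ℚ_[p])/4 with hwdef
  have hnw : ‖w‖ ≤ (p:ℝ)⁻¹ := by
    rw [hwdef, norm_div, norm_mul, norm_four p hodd, Padic.norm_p]
    calc ‖(δ:ℚ_[p])‖ * (p:ℝ)⁻¹ / 1 = ‖(δ:ℚ_[p])‖ * (p:ℝ)⁻¹ := by ring
      _ ≤ 1 * (p:ℝ)⁻¹ := mul_le_mul_of_nonneg_right (norm_nat_le_one p δ) hpinv0
      _ = (p:ℝ)⁻¹ := one_mul _
  have hx : ‖4 * (z : ℚ_[p]) * (1 - (z : ℚ_[p]))‖ ≤ 1 := by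
    rw [norm_mul, norm_mul, norm_four p hodd]
    have hz : ‖((z : ℚ_[p]))‖ ≤ 1 := by
      rw [PadicInt.padic_norm_e_of_padicInt]; exact PadicInt.norm_le_one z
    have hz1 : ‖1 - ((z : ℚ_[p]))‖ ≤ 1 := by
      have := Padic.nonarchimedean (1 : ℚ_[p]) (-(z:ℚ_[p]))
      rw [← sub_eq_add_neg] at this
      refine le_trans this (max_le ?_ ?_)
      · simp
      · rw [norm_neg]; exact hz
    calc 1 * ‖((z : ℚ_[p]))‖ * ‖1 - ((z : ℚ_[p]))‖ ≤ 1 * 1 * 1 := by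
          apply mul_le_mul _ hz1 (norm_nonneg _) (by norm_num)
          apply mul_le_mul le_rfl hz (norm_nonneg _) (by norm_num)
      _ = 1 := by norm_num
  set x : ℚ_[p] := 4 * (z : ℚ_[p]) * (1 - (z : ℚ_[p])) with hxdef
  have hxk : ∀ k : ℕ, ‖x ^ k‖ ≤ 1 := by
    intro k
    rw [norm_pow]
    exact pow_le_one₀ (norm_nonneg _) hx
  -- the two coefficient estimates
  have coeff_close : ∀ k : ℕ, k < p →
      ‖poch p ((1 : ℚ_[p]) / 4) k ^ 2 / (Nat.factorial k : ℚ_[p]) ^ 2 - ee p r k‖ ≤ ε := by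
    intro k hk
    have hw1 : -(r:ℚ_[p]) = 1/4 - w := by
      rw [hwdef]; linear_combination (-(1:ℚ_[p])/4) * hc
    have hw2 : (r:ℚ_[p]) + 1/2 = 1/4 + w := by
      rw [hwdef]; linear_combination ((1:ℚ_[p])/4) * hc
    have hnum : poch p ((1 : ℚ_[p]) / 4) k ^ 2 - poch p (-(r:ℚ_[p])) k * poch p ((r:ℚ_[p]) + 1/2) k
        = (∏ j ∈ Finset.range k, ((1:ℚ_[p])/4 + j)^2)
          - ∏ j ∈ Finset.range k, (((1:ℚ_[p])/4 + j)^2 - w^2) := by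
      rw [hw1, hw2, poch_eq_prod, poch_eq_prod, poch_eq_prod, ← Finset.prod_pow,
        ← Finset.prod_mul_distrib]
      congr 1
      apply Finset.prod_congr rfl
      intro j _
      ring
    have hprod : ‖poch p ((1 : ℚ_[p]) / 4) k ^ 2
        - poch p (-(r:ℚ_[p])) k * poch p ((r:ℚ_[p]) + 1/2) k‖ ≤ ε := by
      rw [hnum]
      apply prod_sub_prod_norm p _ _ hε0
      · intro j
        rw [norm_pow]
        exact pow_le_one₀ (norm_nonneg _) (norm_aj p hodd j)
      · intro j
        have h1 : ((1:ℚ_[p])/4 + j)^2 - w^2 = ((1:ℚ_[p])/4 + j)^2 + (- w^2) := by ring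
        rw [h1]
        refine le_trans (Padic.nonarchimedean _ _) (max_le ?_ ?_)
        · rw [norm_pow]
          exact pow_le_one₀ (norm_nonneg _) (norm_aj p hodd j)
        · rw [norm_neg, norm_pow]
          refine le_trans ?_ hε1
          rw [hε]
          exact pow_le_pow_left₀ (norm_nonneg _) hnw 2
      · intro j
        have h1 : ((1:ℚ_[p])/4 + j)^2 - (((1:ℚ_[p])/4 + j)^2 - w^2) = w^2 := by ring
        rw [h1, norm_pow, hε]
        exact pow_le_pow_left₀ (norm_nonneg _) hnw 2
    have hfac : ‖((Nat.factorial k : ℚ_[p]))^2‖ = 1 := by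
      rw [norm_pow, norm_fact_eq_one p hk, one_pow]
    rw [ee, div_sub_div_same, norm_div, hfac, div_one]
    exact hprod
  have coeff_small : ∀ k : ℕ, r < k → k < p →
      ‖poch p ((1 : ℚ_[p]) / 4) k ^ 2 / (Nat.factorial k : ℚ_[p]) ^ 2‖ ≤ ε := by
    intro k hrk hk
    have hfac : ‖((Nat.factorial k : ℚ_[p]))^2‖ = 1 := by
      rw [norm_pow, norm_fact_eq_one p hk, one_pow]
    rw [norm_div, hfac, div_one, norm_pow, hε]
    refine pow_le_pow_left₀ (norm_nonneg _) ?_ 2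
    rw [poch_eq_prod, norm_prod]
    have hrmem : r ∈ Finset.range k := Finset.mem_range.mpr hrk
    rw [← Finset.mul_prod_erase _ _ hrmem]
    have h1 : ‖(1:ℚ_[p])/4 + (r:ℚ_[p])‖ ≤ (p:ℝ)⁻¹ := by
      have : (1:ℚ_[p])/4 + (r:ℚ_[p]) = w := by
        rw [hwdef]; linear_combination ((1:ℚ_[p])/4) * hc
      rw [this]
      exact hnw
    calc ‖(1:ℚ_[p])/4 + (r:ℚ_[p])‖ * ∏ j ∈ (Finset.range k).erase r, ‖(1:ℚ_[p])/4 + (j:ℚ_[p])‖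
        ≤ (p:ℝ)⁻¹ * 1 := by
          apply mul_le_mul h1 _ _ hpinv0
          · exact Finset.prod_le_one (fun j _ => norm_nonneg _) (fun j _ => norm_aj p hodd j)
          · exact Finset.prod_nonneg (fun j _ => norm_nonneg _)
      _ = (p:ℝ)⁻¹ := mul_one _
  -- assemble
  rw [legendre_eq_GG]
  have hsplit : (∑ k ∈ Finset.range p,
      poch p ((1 : ℚ_[p]) / 4) k ^ 2 / (Nat.factorial k : ℚ_[p]) ^ 2 * x ^ k)
      = (∑ k ∈ Finset.range (r+1),
          poch p ((1 : ℚ_[p]) / 4) k ^ 2 / (Nat.factorial k : ℚ_[p]) ^ 2 * x ^ k)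
        + ∑ k ∈ Finset.Ico (r+1) p,
          poch p ((1 : ℚ_[p]) / 4) k ^ 2 / (Nat.factorial k : ℚ_[p]) ^ 2 * x ^ k := by
    rw [Finset.sum_range_add_sum_Ico _ (by omega : r + 1 ≤ p)]
  have hreorg : (∑ k ∈ Finset.range p,
      poch p ((1 : ℚ_[p]) / 4) k ^ 2 / (Nat.factorial k : ℚ_[p]) ^ 2 * x ^ k)
      - ∑ k ∈ Finset.range (r+1), ee p r k * x ^ k
      = (∑ k ∈ Finset.range (r+1),
          (poch p ((1 : ℚ_[p]) / 4) k ^ 2 / (Nat.factorial k : ℚ_[p]) ^ 2 - ee p r k) * x ^ k)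
        + ∑ k ∈ Finset.Ico (r+1) p,
          poch p ((1 : ℚ_[p]) / 4) k ^ 2 / (Nat.factorial k : ℚ_[p]) ^ 2 * x ^ k := by
    rw [hsplit, add_sub_right_comm, ← Finset.sum_sub_distrib]
    congr 1
    apply Finset.sum_congr rfl
    intro k _
    ring
  rw [hreorg]
  refine le_trans (Padic.nonarchimedean _ _) (max_le ?_ ?_)
  · apply IsUltrametricDist.norm_sum_le_of_forall_le_of_nonneg hε0
    intro k hk
    have hkr := Finset.mem_range.mp hk
    rw [norm_mul]
    calc ‖poch p ((1 : ℚ_[p]) / 4) k ^ 2 / (Nat.factorial k : ℚ_[p]) ^ 2 - ee p r k‖ * ‖x ^ k‖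
        ≤ ε * 1 := mul_le_mul (coeff_close k (by omega)) (hxk k) (norm_nonneg _) hε0
      _ = ε := mul_one ε
  · apply IsUltrametricDist.norm_sum_le_of_forall_le_of_nonneg hε0
    intro k hk
    rw [Finset.mem_Ico] at hk
    rw [norm_mul]
    calc ‖poch p ((1 : ℚ_[p]) / 4) k ^ 2 / (Nat.factorial k : ℚ_[p]) ^ 2‖ * ‖x ^ k‖
        ≤ ε * 1 := mul_le_mul (coeff_small k (by omega) (by omega)) (hxk k) (norm_nonneg _) hε0
      _ = ε := mul_one ε

end PadicLegendreAux

/-- The truncated `₂F₁[1/4,1/4;1|4z(1−z)]` is congruent mod `p²` to a Legendre polynomial. -/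
theorem padic_2F1_quarter_legendre
    (p : ℕ) [Fact p.Prime] (hp : Odd p) (z : ℤ_[p]) :
    (p % 4 = 1 →
      ‖(∑ k ∈ Finset.range p,
          poch p ((1 : ℚ_[p]) / 4) k ^ 2 / (Nat.factorial k : ℚ_[p]) ^ 2
            * (4 * (z : ℚ_[p]) * (1 - (z : ℚ_[p]))) ^ k)
        - legendreL p ((p - 1) / 2) (z : ℚ_[p])‖ ≤ (p : ℝ) ^ (-2 : ℤ)) ∧
    (p % 4 = 3 →
      ‖(∑ k ∈ Finset.range p,
          poch p ((1 : ℚ_[p]) / 4) k ^ 2 / (Nat.factorial k : ℚ_[p]) ^ 2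
            * (4 * (z : ℚ_[p]) * (1 - (z : ℚ_[p]))) ^ k)
        - legendreL p ((3 * p - 1) / 2) (z : ℚ_[p])‖ ≤ (p : ℝ) ^ (-2 : ℤ)) := by
  have hodd : p ≠ 2 := by
    rw [Nat.odd_iff] at hp
    omega
  constructor
  · intro h1
    have hn : (p - 1) / 2 = 2 * (p / 4) := by omega
    rw [hn]
    exact PadicLegendreAux.main p hodd (p/4) 1 (by omega) (by omega) z
  · intro h3
    have hn : (3 * p - 1) / 2 = 2 * ((3 * p) / 4) := by omega
    rw [hn]
    exact PadicLegendreAux.main p hodd ((3*p)/4) 3 (by omega) (by omega) z
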